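/- Let g be CN-war-stable with equal strengths and γ ≥ 1, and let i be a vertex of maximum degree with ij ∈ g. Then the closed neighborhoods of i and j cannot coincide except for each other: N_i(g)\{j} ≠ N_j(g)\{i}. -/
import Mathlib


open Finset

/-- The allies (neighbors) of `i` in network `g`, as a `Finset`. -/
noncomputable def nbrs {V : Type*} [Fintype V] (g : SimpleGraph V) (i : V) : Finset V :=
  @Finset.filter _ (fun j => g.Adj i j) (Classical.decPred _) Finset.univ

/-- The network `g` with the alliance `jk` added. -/
def addE {V : Type*} (g : SimpleGraph V) (j k : V) : SimpleGraph V :=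
  g ⊔ SimpleGraph.fromEdgeSet {s(j, k)}

/-- The network `g` with the alliance `jk` deleted. -/
def delE {V : Type*} (g : SimpleGraph V) (j k : V) : SimpleGraph V :=
  g.deleteEdges {s(j, k)}

/-- CN-vulnerability with uniform strengths `M C = |C|` and constant `γ`:
country `i` is CN-vulnerable at `g` if some clique `C` of `g` not containing `i`
satisfies `|C| > γ · (1 + |N_i(g) \ C|)`. -/
def CNVul {V : Type*} [Fintype V] [DecidableEq V] (g : SimpleGraph V) (γ : ℝ) (i : V) :
    Prop :=
  ∃ C : Finset V, g.IsClique ↑C ∧ i ∉ C ∧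
    γ * (1 + ((nbrs g i) \ C).card) < (C.card : ℝ)

/-- CN-war-stability: (S1) no country CN-vulnerable; (S2) no country CN-vulnerable after
adding any non-link; (S3) both endpoints of any link become CN-vulnerable upon its
deletion. -/
def CNWarStable {V : Type*} [Fintype V] [DecidableEq V] (g : SimpleGraph V) (γ : ℝ) :
    Prop :=
  (∀ v : V, ¬ CNVul g γ v) ∧
  (∀ j k : V, j ≠ k → ¬ g.Adj j k → ∀ v : V, ¬ CNVul (addE g j k) γ v) ∧
  (∀ j k : V, g.Adj j k → CNVul (delE g j k) γ j ∧ CNVul (delE g j k) γ k)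

section helpers
variable {V : Type*} [Fintype V] [DecidableEq V]

lemma mem_nbrs (g : SimpleGraph V) (i x : V) : x ∈ nbrs g i ↔ g.Adj i x := by
  simp [nbrs]

lemma nbrs_delE_left (g : SimpleGraph V) (i j : V) :
    nbrs (delE g i j) i = nbrs g i \ {j} := by
  ext x
  simp only [mem_nbrs, delE, SimpleGraph.deleteEdges_adj, Set.mem_singleton_iff,
    Finset.mem_sdiff, Finset.mem_singleton, Sym2.eq_iff]
  constructor
  · rintro ⟨h, h2⟩
    refine ⟨h, fun hxj => h2 (Or.inl ⟨trivial, hxj⟩)⟩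
  · rintro ⟨h, h2⟩
    refine ⟨h, ?_⟩
    rintro (⟨-, rfl⟩ | ⟨rfl, rfl⟩)
    · exact h2 rfl
    · exact g.irrefl h

lemma nbrs_addE_other (g : SimpleGraph V) {i v j : V} (hji : j ≠ i) (hjv : j ≠ v) :
    nbrs (addE g i v) j = nbrs g j := by
  ext x
  simp only [mem_nbrs, addE, SimpleGraph.sup_adj, SimpleGraph.fromEdgeSet_adj,
    Set.mem_singleton_iff, Sym2.eq_iff]
  constructor
  · rintro (h | ⟨(⟨rfl, rfl⟩ | ⟨rfl, rfl⟩), hne⟩)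
    · exact h
    · exact absurd rfl hji
    · exact absurd rfl hjv
  · exact Or.inl

lemma addE_adj (g : SimpleGraph V) {i v : V} (h : i ≠ v) : (addE g i v).Adj i v := by
  simp [addE, SimpleGraph.fromEdgeSet_adj, h]

end helpers

/-- Claim 3: if `g` is CN-war-stable, `i` has maximum degree and `ij ∈ g`,
then `N_i(g) \ {j} ≠ N_j(g) \ {i}`. -/
theorem claim_three {n : ℕ} (hn : 3 ≤ n) (γ : ℝ) (hγ : 1 ≤ γ)
    (g : SimpleGraph (Fin n)) (hstable : CNWarStable g γ)
    (i j : Fin n) (hmax : ∀ v : Fin n, (nbrs g v).card ≤ (nbrs g i).card)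
    (hij : g.Adj i j) :
    nbrs g i \ {j} ≠ nbrs g j \ {i} := by
  intro heq
  obtain ⟨hS1, hS2, hS3⟩ := hstable
  have hne : i ≠ j := hij.ne
  obtain ⟨C, hCclq', hiC, hlt⟩ := (hS3 i j hij).1
  have hdel_le : delE g i j ≤ g := SimpleGraph.deleteEdges_le _
  have hCclq : g.IsClique ↑C := hCclq'.mono hdel_le
  set A : Finset (Fin n) := nbrs g i \ {j} with hA
  have hjmem : j ∈ nbrs g i := (mem_nbrs g i j).2 hij
  have himem : i ∈ nbrs g j := (mem_nbrs g j i).2 hij.symm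
  have hiA : i ∉ A := by
    intro h
    exact g.irrefl ((mem_nbrs g i i).1 (Finset.mem_sdiff.1 h).1)
  have hjA : j ∉ A := by simp [hA]
  have hnbrsi : nbrs g i = insert j A := by
    rw [hA, Finset.sdiff_singleton_eq_erase, Finset.insert_erase hjmem]
  have hnbrsj : nbrs g j = insert i A := by
    rw [heq, Finset.sdiff_singleton_eq_erase, Finset.insert_erase himem]
  have hAadji : ∀ x ∈ A, g.Adj i x := by
    intro x hx
    exact (mem_nbrs g i x).1 (Finset.mem_sdiff.1 hx).1
  have hAadjj : ∀ x ∈ A, g.Adj j x := by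
    intro x hx
    have : x ∈ nbrs g j := by
      rw [hnbrsj]; exact Finset.mem_insert_of_mem hx
    exact (mem_nbrs g j x).1 this
  rw [nbrs_delE_left, ← hA] at hlt
  -- hlt : γ * (1 + ↑(A \ C).card) < ↑C.card
  by_cases hjC : j ∈ C
  · -- case (a) : swap j for i, j is vulnerable at g
    refine hS1 j ⟨insert i (C.erase j), ?_, ?_, ?_⟩
    · -- clique
      have hsubA : ∀ x ∈ C.erase j, x ∈ A := by
        intro x hx
        have hxC := Finset.mem_of_mem_erase hx
        have hxj : x ≠ j := Finset.ne_of_mem_erase hx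
        have hxi : x ≠ i := fun h => hiC (h ▸ hxC)
        have hadj : g.Adj j x :=
          hdel_le (hCclq' (Finset.mem_coe.2 hjC) (Finset.mem_coe.2 hxC) (Ne.symm hxj))
        have : x ∈ nbrs g j := (mem_nbrs g j x).2 hadj
        rw [hnbrsj, Finset.mem_insert] at this
        exact this.resolve_left hxi
      intro x hx y hy hxy
      simp only [Finset.coe_insert, Set.mem_insert_iff, Finset.mem_coe] at hx hy
      rcases hx with rfl | hx
      · rcases hy with rfl | hy
        · exact absurd rfl hxy
        · exact hAadji y (hsubA y hy)
      · rcases hy with rfl | hy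
        · exact (hAadji x (hsubA x hx)).symm
        · exact hCclq (Finset.mem_coe.2 (Finset.mem_of_mem_erase hx))
            (Finset.mem_coe.2 (Finset.mem_of_mem_erase hy)) hxy
    · simp [hne.symm]
    · have hset : nbrs g j \ insert i (C.erase j) = A \ C := by
        rw [hnbrsj]
        ext x
        simp only [Finset.mem_sdiff, Finset.mem_insert, Finset.mem_erase]
        constructor
        · rintro ⟨hx, hnot⟩
          push_neg at hnot
          obtain ⟨hxi, hnot2⟩ := hnot
          have hxA : x ∈ A := hx.resolve_left hxi
          have hxj : x ≠ j := fun h => hjA (h ▸ hxA)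
          exact ⟨hxA, fun hxC => (hnot2 hxj hxC).elim⟩
        · rintro ⟨hxA, hxC⟩
          have hxi : x ≠ i := fun h => hiA (h ▸ hxA)
          exact ⟨Or.inr hxA, by push_neg; exact ⟨hxi, fun _ h => hxC h⟩⟩
      have hicard : i ∉ C.erase j := fun h => hiC (Finset.mem_of_mem_erase h)
      have hcard : (insert i (C.erase j)).card = C.card := by
        rw [Finset.card_insert_of_notMem hicard, Finset.card_erase_of_mem hjC]
        have : 1 ≤ C.card := Finset.card_pos.2 ⟨j, hjC⟩
        omega
      rw [hset, hcard]
      exact hlt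
  · by_cases hCA : ∀ v ∈ C, v ∈ A
    · -- case (b) : C ⊆ A, add i to C, j is vulnerable at g
      refine hS1 j ⟨insert i C, ?_, ?_, ?_⟩
      · intro x hx y hy hxy
        simp only [Finset.coe_insert, Set.mem_insert_iff, Finset.mem_coe] at hx hy
        rcases hx with rfl | hx
        · rcases hy with rfl | hy
          · exact absurd rfl hxy
          · exact hAadji y (hCA y hy)
        · rcases hy with rfl | hy
          · exact (hAadji x (hCA x hx)).symm
          · exact hCclq (Finset.mem_coe.2 hx) (Finset.mem_coe.2 hy) hxy
      · simp [hne.symm, hjC]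
      · have hset : nbrs g j \ insert i C = A \ C := by
          rw [hnbrsj]
          ext x
          simp only [Finset.mem_sdiff, Finset.mem_insert]
          constructor
          · rintro ⟨hx, hnot⟩
            push_neg at hnot
            exact ⟨hx.resolve_left hnot.1, hnot.2⟩
          · rintro ⟨hxA, hxC⟩
            exact ⟨Or.inr hxA, by push_neg; exact ⟨fun h => hiA (h ▸ hxA), hxC⟩⟩
        rw [hset, Finset.card_insert_of_notMem hiC]
        push_cast
        linarith
    · -- case (c)
      push_neg at hCA
      obtain ⟨v, hvC, hvA⟩ := hCA
      have hvi : v ≠ i := fun h => hiC (h ▸ hvC)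
      have hvj : v ≠ j := fun h => hjC (h ▸ hvC)
      have hnadj : ¬ g.Adj i v := by
        rw [← mem_nbrs, hnbrsi]
        simp [hvA, hvj]
      set T : Finset (Fin n) := A ∩ C with hT
      have hvT : v ∉ T := fun h => hvA (Finset.mem_inter.1 h).1
      have hiT : i ∉ insert v T := by
        simp only [Finset.mem_insert]
        push_neg
        exact ⟨hvi.symm, fun h => hiA (Finset.mem_inter.1 h).1⟩
      set D : Finset (Fin n) := insert i (insert v T) with hD
      have hDcard : D.card = T.card + 2 := by
        rw [hD, Finset.card_insert_of_notMem hiT, Finset.card_insert_of_notMem hvT]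
      have hDclq : (addE g i v).IsClique ↑D := by
        have hle : g ≤ addE g i v := le_sup_left
        intro x hx y hy hxy
        simp only [hD, Finset.coe_insert, Set.mem_insert_iff, Finset.mem_coe] at hx hy
        have hTC : ∀ z ∈ T, z ∈ C := fun z hz => (Finset.mem_inter.1 hz).2
        have hTA : ∀ z ∈ T, z ∈ A := fun z hz => (Finset.mem_inter.1 hz).1
        rcases hx with rfl | rfl | hx
        · rcases hy with rfl | rfl | hy
          · exact absurd rfl hxy
          · exact addE_adj g hxy
          · exact hle (hAadji y (hTA y hy))
        · rcases hy with rfl | rfl | hy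
          · exact (addE_adj g (Ne.symm hxy)).symm
          · exact absurd rfl hxy
          · refine hle (hCclq (Finset.mem_coe.2 hvC) (Finset.mem_coe.2 (hTC y hy)) ?_)
            intro h; exact hvT (h ▸ hy)
        · rcases hy with rfl | rfl | hy
          · exact (hle (hAadji x (hTA x hx))).symm
          · refine (hle (hCclq (Finset.mem_coe.2 hvC) (Finset.mem_coe.2 (hTC x hx))
              (fun h => hvT (h ▸ hx)))).symm
          · exact hle (hCclq (Finset.mem_coe.2 (hTC x hx)) (Finset.mem_coe.2 (hTC y hy)) hxy)
      have hjD : j ∉ D := by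
        simp only [hD, Finset.mem_insert]
        push_neg
        exact ⟨hne.symm, hvj.symm, fun h => hjA (Finset.mem_inter.1 h).1⟩
      have hset2 : nbrs g j \ D = A \ C := by
        rw [hnbrsj, hD]
        ext x
        simp only [Finset.mem_sdiff, Finset.mem_insert]
        constructor
        · rintro ⟨hx, hnot⟩
          push_neg at hnot
          obtain ⟨hxi, hxv, hxT⟩ := hnot
          have hxA : x ∈ A := hx.resolve_left hxi
          exact ⟨hxA, fun hxC => hxT (Finset.mem_inter.2 ⟨hxA, hxC⟩)⟩
        · rintro ⟨hxA, hxC⟩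
          refine ⟨Or.inr hxA, ?_⟩
          push_neg
          exact ⟨fun h => hiA (h ▸ hxA), fun h => hvA (h ▸ hxA),
            fun h => hxC (Finset.mem_inter.1 h).2⟩
      have h1 : ((T.card : ℝ) + 2) ≤ γ * (1 + ((A \ C).card : ℝ)) := by
        by_contra hcon
        push_neg at hcon
        refine hS2 i v hvi.symm hnadj j ⟨D, hDclq, hjD, ?_⟩
        rw [nbrs_addE_other g hne.symm hvj.symm, hset2, hDcard]
        push_cast
        linarith
      have hct : (T.card : ℝ) + 2 < (C.card : ℝ) := lt_of_le_of_lt h1 hlt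
      have hctn : T.card + 2 < C.card := by exact_mod_cast hct
      -- pick any w ∈ C, use clique C.erase w against w
      have hCne : C.Nonempty := ⟨v, hvC⟩
      obtain ⟨w, hwC⟩ := hCne
      set K : Finset (Fin n) := C.erase w with hK
      have hKsub : K ⊆ nbrs g w := by
        intro x hx
        rw [mem_nbrs]
        exact hCclq (Finset.mem_coe.2 hwC)
          (Finset.mem_coe.2 (Finset.mem_of_mem_erase hx))
          (Ne.symm (Finset.ne_of_mem_erase hx))
      have hwK : w ∉ K := Finset.notMem_erase _ _
      have hKclq : g.IsClique ↑K :=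
        hCclq.subset (Finset.coe_subset.2 (Finset.erase_subset _ _))
      have h3 : ((K.card : ℝ)) ≤ γ * (1 + ((nbrs g w \ K).card : ℝ)) := by
        by_contra hcon
        push_neg at hcon
        exact hS1 w ⟨K, hKclq, hwK, hcon⟩
      have hKcard : K.card + 1 = C.card := by
        rw [hK, Finset.card_erase_of_mem hwC]
        have : 1 ≤ C.card := Finset.card_pos.2 ⟨w, hwC⟩
        omega
      have hdw : (nbrs g w \ K).card + K.card = (nbrs g w).card :=
        Finset.card_sdiff_add_card_eq_card hKsub
      have hAcard : (T.card) + (A \ C).card = A.card :=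
        Finset.card_inter_add_card_sdiff A C
      have hdg : (nbrs g i).card = (A \ C).card + T.card + 1 := by
        rw [hnbrsi, Finset.card_insert_of_notMem hjA]
        omega
      have hmw := hmax w
      have hnat : (nbrs g w \ K).card + C.card ≤ (A \ C).card + T.card + 2 := by
        omega
      have hcast : ((nbrs g w \ K).card : ℝ) + (C.card : ℝ)
          ≤ ((A \ C).card : ℝ) + (T.card : ℝ) + 2 := by exact_mod_cast hnat
      have hctR : ((T.card : ℝ)) + 3 ≤ (C.card : ℝ) := by exact_mod_cast hctn
      have hKcR : ((K.card : ℝ)) + 1 = (C.card : ℝ) := by exact_mod_cast hKcard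
      -- final contradiction
      set e : ℝ := ((nbrs g w \ K).card : ℝ) with he
      set kk : ℝ := ((A \ C).card : ℝ) with hkk
      have heK : 0 ≤ kk - e := by linarith
      have hprod : 0 ≤ (γ - 1) * (kk - e) :=
        mul_nonneg (by linarith) heK
      nlinarith [h1, hlt, h3, hcast, hctR, hKcR, hprod]
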